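/- Let f be analytic on a disk around α with α a simple zero of f (f(α)=0, f'(α)≠0). Define H_n(z) = D^n((z-α)/f(z)) / D^n(1/f(z)) for z ≠ α near α where both are defined and the denominator is nonzero. Then for each fixed z sufficiently close to α, H_n(z) = O((z-α)^{n+1}) as a function of z; in particular there exist constants C, δ > 0 such that |H_n(z)| ≤ C|z-α|^{n+1} for |z-α| < δ. -/

import Mathlib

open Metric Filter Topology

noncomputable def Gaux (α : ℝ) (Q : ℝ → ℝ) : ℕ → ℝ → ℝ
  | 0 => Q
  | (k+1) => fun z => deriv (Gaux α Q k) z * (z - α) - (k+1) * Gaux α Q k z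

theorem stmt_4 (f : ℝ → ℝ) (α : ℝ) (hf : AnalyticAt ℝ f α)
    (hα : f α = 0) (hα' : deriv f α ≠ 0) (n : ℕ) (hn : 1 ≤ n) :
    ∃ C > 0, ∃ δ > 0, ∀ z : ℝ, 0 < |z - α| → |z - α| < δ →
      f z ≠ 0 → iteratedDeriv n (fun x => 1 / f x) z ≠ 0 →
      |iteratedDeriv n (fun x => (x - α) / f x) z /
          iteratedDeriv n (fun x => 1 / f x) z| ≤ C * |z - α| ^ (n + 1) := by
  -- Step 1: the order of vanishing of f at α is 1
  have hne : ¬ ∀ᶠ z in 𝓝 α, f z = 0 := by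
    intro h
    have h0 : f =ᶠ[𝓝 α] (fun _ => (0:ℝ)) := h
    have := h0.deriv_eq
    simp [deriv_const] at this
    exact hα' this
  have htop : analyticOrderAt f α ≠ ⊤ := by
    simp only [ne_eq, analyticOrderAt_eq_top]; exact hne
  obtain ⟨m, hm⟩ := WithTop.ne_top_iff_exists.mp htop
  obtain ⟨g, hg, hg0, hfg⟩ := (hf.analyticOrderAt_eq_natCast (n := m)).mp hm.symm
  have hm0 : m ≠ 0 := by
    intro h
    subst h
    have := hfg.self_of_nhds
    simp [hα] at this
    exact hg0 this.symm
  have hm1 : m = 1 := by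
    by_contra hne1
    have hm2 : 2 ≤ m := by omega
    have hd1 : HasDerivAt (fun z => (z - α)^m) (↑m * (α - α)^(m-1) * 1) α :=
      ((hasDerivAt_id α).sub_const α).pow m
    have hd2 : HasDerivAt g (deriv g α) α := hg.differentiableAt.hasDerivAt
    have hd : HasDerivAt (fun z => (z - α)^m * g z)
        ((↑m * (α - α)^(m-1) * 1) * g α + (α - α)^m * deriv g α) α := hd1.mul hd2
    have hfg' : f =ᶠ[𝓝 α] fun z => (z - α)^m * g z := by
      filter_upwards [hfg] with z hz using by simpa [smul_eq_mul] using hz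
    have : deriv f α = (↑m * (α - α)^(m-1) * 1) * g α + (α - α)^m * deriv g α := by
      rw [hfg'.deriv_eq, hd.deriv]
    rw [this] at hα'
    apply hα'
    have h1 : (α - α : ℝ) = 0 := sub_self α
    rw [h1, zero_pow (by omega : m - 1 ≠ 0), zero_pow (by omega : m ≠ 0)]
    ring
  subst hm1
  -- Step 2: Q = g⁻¹
  set Q : ℝ → ℝ := fun z => (g z)⁻¹ with hQdef
  have hQ : AnalyticAt ℝ Q α := hg.inv hg0
  -- Step 3: find a ball with good properties
  have hev : ∀ᶠ z in 𝓝 α, g z ≠ 0 ∧ f z = (z - α) * g z ∧ AnalyticAt ℝ Q z := by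
    filter_upwards [hg.continuousAt.eventually_ne hg0, hfg, hQ.eventually_analyticAt]
      with z h1 h2 h3
    exact ⟨h1, by simpa [smul_eq_mul] using h2, h3⟩
  obtain ⟨r, hr, hball⟩ := Metric.eventually_nhds_iff.mp hev
  have hgne : ∀ z ∈ ball α r, g z ≠ 0 := fun z hz => (hball (mem_ball.mp hz)).1
  have hfz : ∀ z ∈ ball α r, f z = (z - α) * g z := fun z hz => (hball (mem_ball.mp hz)).2.1
  have hQball : AnalyticOnNhd ℝ Q (ball α r) := fun z hz => (hball (mem_ball.mp hz)).2.2
  have hαball : α ∈ ball α r := mem_ball_self hr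
  -- (A) Gaux is analytic on the ball
  have hGA : ∀ k, AnalyticOnNhd ℝ (Gaux α Q k) (ball α r) := by
    intro k
    induction k with
    | zero => exact hQball
    | succ k ih =>
      show AnalyticOnNhd ℝ (fun z => deriv (Gaux α Q k) z * (z - α) - (k+1) * Gaux α Q k z) _
      exact fun z hz => (((ih.deriv) z hz).mul (analyticAt_id.sub analyticAt_const)).sub
        (analyticAt_const.mul (ih z hz))
  -- (B) value at α
  have hGval : ∀ k, Gaux α Q k α = (-1)^k * (k.factorial : ℝ) * Q α := by
    intro k
    induction k with
    | zero => simp [Gaux]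
    | succ k ih =>
      show deriv (Gaux α Q k) α * (α - α) - (k+1) * Gaux α Q k α = _
      rw [ih, sub_self, mul_zero, Nat.factorial_succ]
      push_cast
      ring
  -- (C) iterated derivative formula
  have hC : ∀ k, ∀ z ∈ ball α r, z ≠ α →
      iteratedDeriv k (fun x => 1 / f x) z = Gaux α Q k z / (z - α)^(k+1) := by
    intro k
    induction k with
    | zero =>
      intro z hz hzα
      have hz0 : z - α ≠ 0 := sub_ne_zero.mpr hzα
      rw [iteratedDeriv_zero, hfz z hz]
      show 1 / ((z - α) * g z) = (g z)⁻¹ / (z - α)^1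
      rw [pow_one]
      field_simp
    | succ k ih =>
      intro z hz hzα
      have hz0 : z - α ≠ 0 := sub_ne_zero.mpr hzα
      rw [iteratedDeriv_succ]
      have hopen : IsOpen (ball α r \ {α}) := isOpen_ball.sdiff isClosed_singleton
      have heq : iteratedDeriv k (fun x => 1 / f x) =ᶠ[𝓝 z]
          fun w => Gaux α Q k w / (w - α)^(k+1) := by
        filter_upwards [hopen.mem_nhds ⟨hz, hzα⟩] with w hw
        exact ih w hw.1 hw.2
      rw [heq.deriv_eq]
      have hG : HasDerivAt (Gaux α Q k) (deriv (Gaux α Q k) z) z :=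
        ((hGA k z hz).differentiableAt).hasDerivAt
      have hd : HasDerivAt (fun w => (w - α)^(k+1)) ((↑(k+1)) * (z - α)^k * 1) z := by
        simpa using ((hasDerivAt_id z).sub_const α).fun_pow (k+1)
      have hdiv := hG.fun_div hd (pow_ne_zero _ hz0)
      rw [hdiv.deriv]
      show _ = (deriv (Gaux α Q k) z * (z - α) - (↑k+1) * Gaux α Q k z) / (z - α)^(k+2)
      field_simp
      push_cast
      ring
  -- numerator formula
  have hNum : ∀ z ∈ ball α r, z ≠ α →
      iteratedDeriv n (fun x => (x - α) / f x) z = iteratedDeriv n Q z := by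
    intro z hz hzα
    apply Filter.EventuallyEq.iteratedDeriv_eq
    have hopen : IsOpen (ball α r \ {α}) := isOpen_ball.sdiff isClosed_singleton
    filter_upwards [hopen.mem_nhds ⟨hz, hzα⟩] with w hw
    have hw0 : w - α ≠ 0 := sub_ne_zero.mpr hw.2
    rw [hfz w hw.1]
    exact div_mul_cancel_left₀ hw0 (g w)
  -- bounds
  have hQα : Q α ≠ 0 := inv_ne_zero hg0
  have hGnα : Gaux α Q n α ≠ 0 := by
    rw [hGval n]
    exact mul_ne_zero (mul_ne_zero (pow_ne_zero _ (by norm_num))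
      (Nat.cast_ne_zero.mpr n.factorial_ne_zero)) hQα
  set c : ℝ := |Gaux α Q n α| / 2 with hcdef
  have hc : 0 < c := by positivity
  set M : ℝ := ‖iteratedFDeriv ℝ n Q α‖ + 1 with hMdef
  have hM : 0 < M := by positivity
  have hFcont : ContinuousAt (iteratedFDeriv ℝ n Q) α :=
    ((hQball.iteratedFDeriv n) α hαball).continuousAt
  have hGcont : ContinuousAt (Gaux α Q n) α := ((hGA n) α hαball).continuousAt
  have hev2 : ∀ᶠ z in 𝓝 α, ‖iteratedFDeriv ℝ n Q z‖ < M ∧ c < |Gaux α Q n z| := by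
    have h1 : ∀ᶠ z in 𝓝 α, ‖iteratedFDeriv ℝ n Q z‖ < M := by
      have := hFcont.norm
      exact this.eventually_lt continuousAt_const (lt_add_of_pos_right _ one_pos)
    have h2 : ∀ᶠ z in 𝓝 α, c < |Gaux α Q n z| := by
      have := hGcont.abs
      exact continuousAt_const.eventually_lt this (half_lt_self (abs_pos.mpr hGnα))
    exact h1.and h2
  obtain ⟨δ', hδ', hδball⟩ := Metric.eventually_nhds_iff.mp hev2
  refine ⟨M / c, by positivity, min r δ', lt_min hr hδ', ?_⟩
  intro z hz1 hz2 _ _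
  have hzα : z ≠ α := by
    intro h; rw [h] at hz1; simp at hz1
  have hzball : z ∈ ball α r := by
    rw [mem_ball, Real.dist_eq]
    exact lt_of_lt_of_le hz2 (min_le_left _ _)
  have hzδ : dist z α < δ' := by
    rw [Real.dist_eq]
    exact lt_of_lt_of_le hz2 (min_le_right _ _)
  obtain ⟨hb1, hb2⟩ := hδball hzδ
  have hz0 : z - α ≠ 0 := sub_ne_zero.mpr hzα
  rw [hNum z hzball hzα, hC n z hzball hzα]
  rw [div_div_eq_mul_div, abs_div, abs_mul, abs_pow]
  have hnum : |iteratedDeriv n Q z| ≤ M := by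
    rw [iteratedDeriv_eq_iteratedFDeriv]
    calc ‖iteratedFDeriv ℝ n Q z (fun _ => 1)‖
        ≤ ‖iteratedFDeriv ℝ n Q z‖ * ∏ _i : Fin n, ‖(1:ℝ)‖ :=
          (iteratedFDeriv ℝ n Q z).le_opNorm _
      _ = ‖iteratedFDeriv ℝ n Q z‖ := by simp
      _ ≤ M := le_of_lt hb1
  calc |iteratedDeriv n Q z| * |z - α|^(n+1) / |Gaux α Q n z|
      ≤ M * |z - α|^(n+1) / c := by
        apply div_le_div₀ (by positivity)
          (mul_le_mul_of_nonneg_right hnum (by positivity)) hc (le_of_lt hb2)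
    _ = M / c * |z - α|^(n+1) := by ring
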